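/- (Grushin ball inclusions) Let $n, m \geq 1$ and $\beta > 0$. Define on $\mathbb{R}^{n+m}$ the quasi-distance $\sigma((x,y),(x',y')) = |x - x'| + \frac{|y - y'|}{(|x| + |x'|)^{\beta} + |y - y'|^{\beta/(\beta+1)}}$ (with the convention that the quotient is $0$ when $y = y'$). Then there exist constants $c_1, c_2 > 0$ depending only on $\beta$ such that for all $r > 0$ and $y \in \mathbb{R}^m$: $B_n(0, c_1 r) \times B_m(y, c_1 r^{\beta+1}) \subseteq \{\eta : \sigma((0,y), \eta) < r\} \subseteq B_n(0, c_2 r) \times B_m(y, c_2 r^{\beta+1})$, where $B_n$, $B_m$ denote Euclidean balls in $\mathbb{R}^n$, $\mathbb{R}^m$. -/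

import Mathlib

open MeasureTheory Metric Set

/-- The Grushin quasi-distance
`σ((x,y),(x',y')) = |x-x'| + |y-y'| / ((|x|+|x'|)^β + |y-y'|^{β/(β+1)})`
(the quotient being `0` when `y = y'`, by the Lean convention `0/0 = 0`). -/
noncomputable def gsigma (n m : ℕ) (β : ℝ)
    (ξ η : EuclideanSpace ℝ (Fin n) × EuclideanSpace ℝ (Fin m)) : ℝ :=
  ‖ξ.1 - η.1‖ + ‖ξ.2 - η.2‖ / ((‖ξ.1‖ + ‖η.1‖) ^ β + ‖ξ.2 - η.2‖ ^ (β / (β + 1)))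

/-- Grushin ball inclusions at centers `(0,y)`: there are `c₁, c₂ > 0` depending only on `β`
with `B_n(0,c₁r) × B_m(y,c₁r^{β+1}) ⊆ {σ((0,y),·) < r} ⊆ B_n(0,c₂r) × B_m(y,c₂r^{β+1})`. -/
theorem stmt_9 (n m : ℕ) (hn : 1 ≤ n) (hm : 1 ≤ m) (β : ℝ) (hβ : 0 < β) :
    ∃ c₁ c₂ : ℝ, 0 < c₁ ∧ 0 < c₂ ∧
      ∀ (r : ℝ), 0 < r → ∀ y : EuclideanSpace ℝ (Fin m),
        (ball (0 : EuclideanSpace ℝ (Fin n)) (c₁ * r) ×ˢ ball y (c₁ * r ^ (β + 1))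
            ⊆ {η | gsigma n m β (0, y) η < r}) ∧
        ({η | gsigma n m β (0, y) η < r}
            ⊆ ball (0 : EuclideanSpace ℝ (Fin n)) (c₂ * r) ×ˢ ball y (c₂ * r ^ (β + 1))) := by
  have hβ1 : (0:ℝ) < β + 1 := by linarith
  refine ⟨(1/2) ^ (β+1), 2 ^ (β+2), Real.rpow_pos_of_pos (by norm_num) _,
    Real.rpow_pos_of_pos (by norm_num) _, ?_⟩
  intro r hr y
  constructor
  · rintro ⟨x', y'⟩ ⟨hx, hy⟩
    simp only [mem_ball, dist_zero_right] at hx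
    rw [mem_ball, dist_eq_norm, ← norm_sub_rev] at hy
    simp only [mem_setOf_eq, gsigma, zero_sub, norm_neg, norm_zero, zero_add]
    set d : ℝ := ‖y - y'‖ with hd
    have hd0 : 0 ≤ d := norm_nonneg _
    -- second term bound
    have h2 : d / (‖x'‖ ^ β + d ^ (β/(β+1))) ≤ d ^ (1/(β+1)) := by
      rcases eq_or_lt_of_le hd0 with h | h
      · rw [← h]
        rw [Real.zero_rpow (by positivity : (1:ℝ)/(β+1) ≠ 0)]
        simp
      · have hB : 0 < d ^ (β/(β+1)) := Real.rpow_pos_of_pos h _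
        have hA : 0 ≤ ‖x'‖ ^ β := Real.rpow_nonneg (norm_nonneg _) _
        calc d / (‖x'‖ ^ β + d ^ (β/(β+1))) ≤ d / d ^ (β/(β+1)) :=
              div_le_div_of_nonneg_left hd0 hB (by linarith)
          _ = d ^ ((1:ℝ) - β/(β+1)) := by
              rw [Real.rpow_sub h, Real.rpow_one]
          _ = d ^ (1/(β+1)) := by
              congr 1
              field_simp
              ring
    have hyd : d < (r/2) ^ (β+1) := by
      have : ((1:ℝ)/2) ^ (β+1) * r ^ (β+1) = (r/2) ^ (β+1) := by
        rw [← Real.mul_rpow (by norm_num) hr.le]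
        ring_nf
      rw [this] at hy
      exact hy
    have h3 : d ^ (1/(β+1)) ≤ r/2 := by
      have h := Real.rpow_le_rpow hd0 hyd.le (by positivity : (0:ℝ) ≤ 1/(β+1))
      rw [← Real.rpow_mul (by positivity : (0:ℝ) ≤ r/2),
        mul_one_div, div_self (ne_of_gt hβ1), Real.rpow_one] at h
      exact h
    have hx' : ‖x'‖ < r/2 := by
      have hc : ((1:ℝ)/2) ^ (β+1) ≤ (1/2 : ℝ) := by
        have := Real.rpow_le_rpow_of_exponent_ge (by norm_num : (0:ℝ) < 1/2)
          (by norm_num : (1:ℝ)/2 ≤ 1) (by linarith : (1:ℝ) ≤ β + 1)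
        rwa [Real.rpow_one] at this
      calc ‖x'‖ < (1/2:ℝ) ^ (β+1) * r := hx
        _ ≤ (1/2) * r := by nlinarith
        _ = r/2 := by ring
    linarith
  · rintro ⟨x', y'⟩ hσ
    simp only [mem_setOf_eq, gsigma, zero_sub, norm_neg, norm_zero, zero_add] at hσ
    set d : ℝ := ‖y - y'‖ with hd
    have hd0 : 0 ≤ d := norm_nonneg _
    have hq : 0 ≤ d / (‖x'‖ ^ β + d ^ (β/(β+1))) :=
      div_nonneg hd0 (by positivity)
    have hx : ‖x'‖ < r := by linarith
    have hone : (1:ℝ) ≤ 2 ^ (β+2) := by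
      have := Real.rpow_le_rpow_of_exponent_le (by norm_num : (1:ℝ) ≤ 2)
        (by linarith : (0:ℝ) ≤ β + 2)
      rwa [Real.rpow_zero] at this
    have htwo : (2:ℝ) ≤ 2 ^ (β+2) := by
      have := Real.rpow_le_rpow_of_exponent_le (by norm_num : (1:ℝ) ≤ 2)
        (by linarith : (1:ℝ) ≤ β + 2)
      rwa [Real.rpow_one] at this
    have hrb : 0 < r ^ (β+1) := Real.rpow_pos_of_pos hr _
    constructor
    · rw [mem_ball, dist_zero_right]
      nlinarith
    · rw [mem_ball, dist_eq_norm, ← norm_sub_rev, ← hd]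
      have h2 : d / (‖x'‖ ^ β + d ^ (β/(β+1))) < r := by
        have : 0 ≤ ‖x'‖ := norm_nonneg _
        linarith
      rcases eq_or_lt_of_le hd0 with h | hdpos
      · rw [← h]; nlinarith
      · have hB : 0 < d ^ (β/(β+1)) := Real.rpow_pos_of_pos hdpos _
        have hD : 0 < ‖x'‖ ^ β + d ^ (β/(β+1)) := by positivity
        rw [div_lt_iff₀ hD] at h2
        have hxb : ‖x'‖ ^ β ≤ r ^ β := by
          rcases eq_or_lt_of_le (norm_nonneg x') with h0 | h0
          · rw [← h0, Real.zero_rpow (ne_of_gt hβ)]; positivity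
          · exact (Real.rpow_lt_rpow (norm_nonneg _) hx hβ).le
        have hrr : r * r ^ β = r ^ (β+1) := by
          rw [Real.rpow_add_one (ne_of_gt hr)]; ring
        have hkey : d < r ^ (β+1) + r * d ^ (β/(β+1)) := by nlinarith
        by_cases hc : d ≤ 2 * (r * d ^ (β/(β+1)))
        · have hsplit : d = d ^ (β/(β+1)) * d ^ (1/(β+1)) := by
            rw [← Real.rpow_add hdpos]
            rw [show β/(β+1) + 1/(β+1) = 1 by field_simp, Real.rpow_one]
          have hle : d ^ (1/(β+1)) ≤ 2 * r := by
            by_contra hlt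
            push_neg at hlt
            have hlt2 : 2 * (r * d ^ (β/(β+1))) < d :=
              calc 2 * (r * d ^ (β/(β+1))) = d ^ (β/(β+1)) * (2 * r) := by ring
                _ < d ^ (β/(β+1)) * d ^ (1/(β+1)) := by
                    exact mul_lt_mul_of_pos_left hlt hB
                _ = d := hsplit.symm
            linarith
          have hdle : d ≤ (2*r) ^ (β+1) := by
            have h := Real.rpow_le_rpow (Real.rpow_nonneg hd0 _) hle (le_of_lt hβ1)
            rwa [← Real.rpow_mul hd0, show (1/(β+1)) * (β+1) = 1 by field_simp,
              Real.rpow_one] at h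
          have hsplit2 : (2*r) ^ (β+1) = 2 ^ (β+1) * r ^ (β+1) :=
            Real.mul_rpow (by norm_num) hr.le
          have hpow : (2:ℝ) ^ (β+1) < 2 ^ (β+2) :=
            Real.rpow_lt_rpow_of_exponent_lt (by norm_num) (by linarith)
          calc d ≤ 2 ^ (β+1) * r ^ (β+1) := by rw [← hsplit2]; exact hdle
            _ < 2 ^ (β+2) * r ^ (β+1) := by nlinarith
        · push_neg at hc
          have : d < 2 * r ^ (β+1) := by linarith
          nlinarith
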